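/- General upper bound on the ZRP Poincaré constant: if P is an n×n doubly stochastic matrix and the rates are homogeneous r(x,k) = r(k), then λ(ZRP(P,r,m)) ≤ (1 − 1/n) λ(P) E_μ[r(ζ)]/Var_μ(ζ), where ζ is the number of particles on a fixed site under the stationary law μ. -/

import Mathlib

open Finset

variable (V : Type*) [Fintype V] [DecidableEq V]

/-- Product-form (unnormalized) stationary weight of a configuration. -/
noncomputable def weight (π : V → ℝ) (r : V → ℕ → ℝ) (η : V → ℕ) : ℝ :=
  ∏ x, ∏ k ∈ Finset.Icc 1 (η x), π x / r x k

/-- Add one particle at site `x` : the configuration `η + δ_x`. -/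
def addOne (η : V → ℕ) (x : V) : V → ℕ := Function.update η x (η x + 1)

/-- Move a particle from `x` to `y`: the configuration `η + δ_y - δ_x`. -/
def move (η : V → ℕ) (x y : V) : V → ℕ :=
  addOne V (Function.update η x (η x - 1)) y

/-- The set of configurations of `m` particles on `V`. -/
def configs (m : ℕ) : Finset (V → ℕ) :=
  (Fintype.piFinset fun _ : V => Finset.range (m + 1)).filter fun η => ∑ x, η x = m

/-- Single-particle Dirichlet form `⟨φ, (I - P) ψ⟩_π`. -/
noncomputable def EP (π : V → ℝ) (P : V → V → ℝ) (φ ψ : V → ℝ) : ℝ :=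
  ∑ x, ∑ y, π x * P x y * (φ x * (ψ x - ψ y))

/-- Zero-range Dirichlet form with jump matrix `P`, rates `r` and measure `μ`
on configurations with `m` particles. -/
noncomputable def EZRP (P : V → V → ℝ) (r : V → ℕ → ℝ) (μ : (V → ℕ) → ℝ) (m : ℕ)
    (f g : (V → ℕ) → ℝ) : ℝ :=
  ∑ η ∈ configs V m, ∑ x, ∑ y,
    μ η * r x (η x) * P x y * (f η * (g η - g (move V η x y)))

/-- Mean of an observable on `m`-particle configurations under `μ`. -/
noncomputable def meanOn (m : ℕ) (μ : (V → ℕ) → ℝ) (f : (V → ℕ) → ℝ) : ℝ :=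
  ∑ η ∈ configs V m, μ η * f η

/-- Variance of an observable on `m`-particle configurations under `μ`. -/
noncomputable def varOn (m : ℕ) (μ : (V → ℕ) → ℝ) (f : (V → ℕ) → ℝ) : ℝ :=
  meanOn V m μ (fun η => (f η) ^ 2) - (meanOn V m μ f) ^ 2

/-- Variance of `φ : V → ℝ` under the probability vector `π`. -/
noncomputable def varPi (π : V → ℝ) (φ : V → ℝ) : ℝ :=
  ∑ x, π x * (φ x) ^ 2 - (∑ x, π x * φ x) ^ 2

section ZRPAux

variable {n : ℕ}

lemma mem_configs_iff {M : ℕ} {η : Fin n → ℕ} :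
    η ∈ configs (Fin n) M ↔ (∀ z, η z ≤ M) ∧ ∑ z, η z = M := by
  simp [configs, Fintype.mem_piFinset, Nat.lt_succ_iff]

lemma weight_eq_prod (c : ℝ) (r : ℕ → ℝ) (η : Fin n → ℕ) :
    weight (Fin n) (fun _ => c) (fun _ k => r k) η
      = ∏ z, ∏ k ∈ Finset.Icc 1 (η z), c / r k := rfl

lemma weight_pos {c : ℝ} (hc : 0 < c) {r : ℕ → ℝ} (hr : ∀ k, 1 ≤ k → 0 < r k)
    (η : Fin n → ℕ) : 0 < weight (Fin n) (fun _ => c) (fun _ k => r k) η := by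
  rw [weight_eq_prod]
  refine Finset.prod_pos fun z _ => Finset.prod_pos fun k hk => ?_
  exact div_pos hc (hr k (Finset.mem_Icc.mp hk).1)

lemma weight_addOne (c : ℝ) (r : ℕ → ℝ) (ξ : Fin n → ℕ) (x : Fin n) :
    weight (Fin n) (fun _ => c) (fun _ k => r k) (addOne (Fin n) ξ x)
      = (c / r (ξ x + 1)) * weight (Fin n) (fun _ => c) (fun _ k => r k) ξ := by
  rw [weight_eq_prod, weight_eq_prod,
    ← Finset.mul_prod_erase Finset.univ _ (Finset.mem_univ x),
    ← Finset.mul_prod_erase Finset.univ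
      (fun z => ∏ k ∈ Finset.Icc 1 (ξ z), c / r k) (Finset.mem_univ x)]
  have h1 : ∀ z ∈ Finset.univ.erase x,
      (∏ k ∈ Finset.Icc 1 (addOne (Fin n) ξ x z), c / r k)
        = ∏ k ∈ Finset.Icc 1 (ξ z), c / r k := by
    intro z hz
    rw [addOne, Function.update_of_ne (Finset.mem_erase.mp hz).1]
  rw [Finset.prod_congr rfl h1]
  have h2 : addOne (Fin n) ξ x x = ξ x + 1 := by rw [addOne, Function.update_self]
  rw [h2, Finset.prod_Icc_succ_top (Nat.succ_le_succ (Nat.zero_le _))]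
  ring

lemma sum_le_of_mem_configs {M : ℕ} {η : Fin n → ℕ} (hη : η ∈ configs (Fin n) M)
    {z x : Fin n} (hzx : z ≠ x) : η z + η x ≤ M := by
  obtain ⟨-, hsum⟩ := mem_configs_iff.mp hη
  calc η z + η x ≤ ∑ w ∈ Finset.univ.erase x, η w + η x :=
        Nat.add_le_add_right (Finset.single_le_sum (fun w _ => Nat.zero_le _)
          (Finset.mem_erase.mpr ⟨hzx, Finset.mem_univ z⟩)) _
    _ = ∑ w, η w := by rw [add_comm, Finset.add_sum_erase _ _ (Finset.mem_univ x)]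
    _ = M := hsum

lemma site_identity {m : ℕ} (hm : 1 ≤ m) (c : ℝ) {r : ℕ → ℝ} (hr0 : r 0 = 0)
    (hr : ∀ k, 1 ≤ k → r k ≠ 0) (x : Fin n) (g : (Fin n → ℕ) → ℝ) :
    ∑ η ∈ configs (Fin n) m, weight (Fin n) (fun _ => c) (fun _ k => r k) η * (r (η x) * g η)
      = c * ∑ ξ ∈ configs (Fin n) (m - 1),
          weight (Fin n) (fun _ => c) (fun _ k => r k) ξ * g (addOne (Fin n) ξ x) := by
  have hfil : ∑ η ∈ configs (Fin n) m,
        weight (Fin n) (fun _ => c) (fun _ k => r k) η * (r (η x) * g η)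
      = ∑ η ∈ (configs (Fin n) m).filter (fun η => 1 ≤ η x),
        weight (Fin n) (fun _ => c) (fun _ k => r k) η * (r (η x) * g η) := by
    refine (Finset.sum_filter_of_ne fun η _ h => ?_).symm
    by_contra hx
    have hx0 : η x = 0 := by omega
    rw [hx0, hr0] at h
    simp at h
  rw [hfil, Finset.mul_sum]
  refine Finset.sum_nbij' (i := fun η => Function.update η x (η x - 1))
    (j := fun ξ => addOne (Fin n) ξ x) ?_ ?_ ?_ ?_ ?_
  · intro η hη
    rw [Finset.mem_filter] at hη
    obtain ⟨hηc, hx1⟩ := hη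
    obtain ⟨hle, hsum⟩ := mem_configs_iff.mp hηc
    refine mem_configs_iff.mpr ⟨fun z => ?_, ?_⟩
    · rcases eq_or_ne z x with rfl | hzx
      · rw [Function.update_self]
        have := hle z
        omega
      · rw [Function.update_of_ne hzx]
        have := sum_le_of_mem_configs hηc hzx
        omega
    · have h3 : ∑ z, η z = η x + ∑ z ∈ Finset.univ \ {x}, η z := by
        rw [← Finset.erase_eq, ← Finset.add_sum_erase _ η (Finset.mem_univ x)]
      rw [Finset.sum_update_of_mem (Finset.mem_univ x)]
      omega
  · intro ξ hξ
    obtain ⟨hle, hsum⟩ := mem_configs_iff.mp hξ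
    rw [Finset.mem_filter]
    constructor
    · refine mem_configs_iff.mpr ⟨fun z => ?_, ?_⟩
      · rcases eq_or_ne z x with rfl | hzx
        · simp only [addOne, Function.update_self]
          have := hle z
          omega
        · simp only [addOne, Function.update_of_ne hzx]
          have := hle z
          omega
      · have h3 : ∑ z, ξ z = ξ x + ∑ z ∈ Finset.univ \ {x}, ξ z := by
          rw [← Finset.erase_eq, ← Finset.add_sum_erase _ ξ (Finset.mem_univ x)]
        simp only [addOne]
        rw [Finset.sum_update_of_mem (Finset.mem_univ x)]
        omega
    · simp only [addOne, Function.update_self]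
      omega
  · intro η hη
    rw [Finset.mem_filter] at hη
    funext z
    simp only [addOne]
    rcases eq_or_ne z x with rfl | hzx
    · simp only [Function.update_self]
      omega
    · simp only [Function.update_of_ne hzx]
  · intro ξ hξ
    funext z
    simp only [addOne]
    rcases eq_or_ne z x with rfl | hzx
    · simp only [Function.update_self]
      omega
    · simp only [Function.update_of_ne hzx]
  · intro η hη
    rw [Finset.mem_filter] at hη
    obtain ⟨hηc, hx1⟩ := hη
    have hback : addOne (Fin n) (Function.update η x (η x - 1)) x = η := by
      funext z
      simp only [addOne]
      rcases eq_or_ne z x with rfl | hzx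
      · simp only [Function.update_self]
        omega
      · simp only [Function.update_of_ne hzx]
    have hxv : Function.update η x (η x - 1) x + 1 = η x := by
      rw [Function.update_self]
      omega
    rw [hback]
    conv_lhs => rw [← hback]
    rw [weight_addOne, hxv]
    have hrx : r (η x) ≠ 0 := hr _ hx1
    field_simp
    rw [congrFun hback x, hback]
    ring

lemma exchange {M : ℕ} (c : ℝ) (r : ℕ → ℝ) (σ : Equiv.Perm (Fin n))
    (g : (Fin n → ℕ) → ℝ) :
    ∑ η ∈ configs (Fin n) M,
        weight (Fin n) (fun _ => c) (fun _ k => r k) η * g (fun z => η (σ z))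
      = ∑ η ∈ configs (Fin n) M,
        weight (Fin n) (fun _ => c) (fun _ k => r k) η * g η := by
  refine Finset.sum_nbij' (i := fun η => fun z => η (σ z))
    (j := fun η => fun z => η (σ.symm z)) ?_ ?_ ?_ ?_ ?_
  · intro η hη
    obtain ⟨hle, hsum⟩ := mem_configs_iff.mp hη
    exact mem_configs_iff.mpr ⟨fun z => hle _, by rw [Equiv.sum_comp σ η]; exact hsum⟩
  · intro η hη
    obtain ⟨hle, hsum⟩ := mem_configs_iff.mp hη
    exact mem_configs_iff.mpr ⟨fun z => hle _, by rw [Equiv.sum_comp σ.symm η]; exact hsum⟩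
  · intro η _; funext z; simp
  · intro η _; funext z; simp
  · intro η _
    have hw : weight (Fin n) (fun _ => c) (fun _ k => r k) (fun z => η (σ z))
        = weight (Fin n) (fun _ => c) (fun _ k => r k) η := by
      rw [weight_eq_prod, weight_eq_prod]
      exact Equiv.prod_comp σ (fun a => ∏ k ∈ Finset.Icc 1 (η a), c / r k)
    rw [hw]

lemma f_addOne (φ : Fin n → ℝ) (ξ : Fin n → ℕ) (x : Fin n) :
    ∑ z, φ z * ((addOne (Fin n) ξ x) z : ℝ) = (∑ z, φ z * (ξ z : ℝ)) + φ x := by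
  rw [← Finset.add_sum_erase _ (fun z => φ z * ((addOne (Fin n) ξ x) z : ℝ))
      (Finset.mem_univ x),
    ← Finset.add_sum_erase _ (fun z => φ z * (ξ z : ℝ)) (Finset.mem_univ x)]
  have h1 : ∀ z ∈ Finset.univ.erase x,
      φ z * ((addOne (Fin n) ξ x) z : ℝ) = φ z * (ξ z : ℝ) := by
    intro z hz
    rw [addOne, Function.update_of_ne (Finset.mem_erase.mp hz).1]
  rw [Finset.sum_congr rfl h1, addOne, Function.update_self]
  push_cast
  ring

lemma f_move (φ : Fin n → ℝ) (η : Fin n → ℕ) (x y : Fin n) (hx : 1 ≤ η x) :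
    ∑ z, φ z * ((move (Fin n) η x y) z : ℝ)
      = (∑ z, φ z * (η z : ℝ)) - φ x + φ y := by
  rw [move, f_addOne]
  have h2 : ∑ z, φ z * ((Function.update η x (η x - 1)) z : ℝ)
      = (∑ z, φ z * (η z : ℝ)) - φ x := by
    rw [← Finset.add_sum_erase _ (fun z => φ z * ((Function.update η x (η x - 1)) z : ℝ))
        (Finset.mem_univ x),
      ← Finset.add_sum_erase _ (fun z => φ z * (η z : ℝ)) (Finset.mem_univ x)]
    have h1 : ∀ z ∈ Finset.univ.erase x,
        φ z * ((Function.update η x (η x - 1)) z : ℝ) = φ z * (η z : ℝ) := by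
      intro z hz
      rw [Function.update_of_ne (Finset.mem_erase.mp hz).1]
    rw [Finset.sum_congr rfl h1, Function.update_self, Nat.cast_sub hx]
    push_cast
    ring
  rw [h2]

lemma var_sq {α : Type*} (s : Finset α) (μ f : α → ℝ) (h1 : ∑ a ∈ s, μ a = 1) :
    (∑ a ∈ s, μ a * f a ^ 2) - (∑ a ∈ s, μ a * f a) ^ 2
      = ∑ a ∈ s, μ a * (f a - ∑ b ∈ s, μ b * f b) ^ 2 := by
  have h : ∀ a ∈ s, μ a * (f a - ∑ b ∈ s, μ b * f b) ^ 2
      = μ a * f a ^ 2 - 2 * (∑ b ∈ s, μ b * f b) * (μ a * f a)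
        + (∑ b ∈ s, μ b * f b) ^ 2 * μ a := fun a _ => by ring
  rw [Finset.sum_congr rfl h, Finset.sum_add_distrib, Finset.sum_sub_distrib,
    ← Finset.mul_sum, ← Finset.mul_sum, h1]
  ring

end ZRPAux

/-- general upper bound on the ZRP Poincaré constant for a doubly
stochastic jump matrix and homogeneous rates. -/
theorem zrp_poincare_upper_bound (n m : ℕ) (hn : 2 ≤ n) (hm : 1 ≤ m)
    (P : Fin n → Fin n → ℝ)
    (hP0 : ∀ x y, 0 ≤ P x y) (hProw : ∀ x, ∑ y, P x y = 1)
    (hPcol : ∀ y, ∑ x, P x y = 1)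
    (r : ℕ → ℝ) (hr : ∀ k, 1 ≤ k → 0 < r k) (hr0 : r 0 = 0)
    (μ : (Fin n → ℕ) → ℝ)
    (hμ : ∀ η, μ η = weight (Fin n) (fun _ => (n : ℝ)⁻¹) (fun _ k => r k) η
        / ∑ ξ ∈ configs (Fin n) m, weight (Fin n) (fun _ => (n : ℝ)⁻¹) (fun _ k => r k) ξ)
    (lamP : ℝ)
    (hlam1 : ∀ φ : Fin n → ℝ,
      lamP * varPi (Fin n) (fun _ => (n : ℝ)⁻¹) φ ≤ EP (Fin n) (fun _ => (n : ℝ)⁻¹) P φ φ)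
    (hlam2 : ∃ φ : Fin n → ℝ, varPi (Fin n) (fun _ => (n : ℝ)⁻¹) φ ≠ 0 ∧
      EP (Fin n) (fun _ => (n : ℝ)⁻¹) P φ φ = lamP * varPi (Fin n) (fun _ => (n : ℝ)⁻¹) φ)
    (lamZ : ℝ)
    (hZ1 : ∀ f : (Fin n → ℕ) → ℝ,
      lamZ * varOn (Fin n) m μ f ≤ EZRP (Fin n) P (fun _ k => r k) μ m f f)
    (hZ2 : ∃ f : (Fin n → ℕ) → ℝ, varOn (Fin n) m μ f ≠ 0 ∧
      EZRP (Fin n) P (fun _ k => r k) μ m f f = lamZ * varOn (Fin n) m μ f)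
    (x₀ : Fin n) :
    lamZ ≤ (1 - (n : ℝ)⁻¹) * lamP
        * (meanOn (Fin n) m μ (fun η => r (η x₀))
            / varOn (Fin n) m μ (fun η => (η x₀ : ℝ))) := by
  obtain ⟨φ, hφvar, hφopt⟩ := hlam2
  have hn2 : (2:ℝ) ≤ (n:ℝ) := by exact_mod_cast hn
  have hn0 : (0:ℝ) < (n:ℝ) := by linarith
  have hn1 : (0:ℝ) < (n:ℝ) - 1 := by linarith
  have hc0 : (0:ℝ) < (n:ℝ)⁻¹ := by positivity
  set c : ℝ := (n:ℝ)⁻¹ with hcdef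
  set w := weight (Fin n) (fun _ => c) (fun _ k => r k) with hwdef
  set Z := ∑ ξ ∈ configs (Fin n) m, w ξ with hZdef
  have hwpos : ∀ η, 0 < w η := fun η => hwdef ▸ weight_pos hc0 hr η
  have hconfne : (configs (Fin n) m).Nonempty := by
    refine ⟨fun z => if z = x₀ then m else 0, mem_configs_iff.mpr ⟨fun z => ?_, ?_⟩⟩
    · split <;> omega
    · simp
  have hZ0 : 0 < Z := by
    rw [hZdef]
    exact Finset.sum_pos (fun η _ => hwpos η) hconfne
  have hμw : ∀ g : (Fin n → ℕ) → ℝ, ∑ η ∈ configs (Fin n) m, μ η * g η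
      = (∑ η ∈ configs (Fin n) m, w η * g η) / Z := by
    intro g
    rw [Finset.sum_div]
    exact Finset.sum_congr rfl fun η _ => by rw [hμ η]; ring
  have hμ1 : ∑ η ∈ configs (Fin n) m, μ η = 1 := by
    have h := hμw (fun _ => 1)
    simp only [mul_one] at h
    rw [h, ← hZdef, div_self hZ0.ne']
  have hμpos : ∀ η ∈ configs (Fin n) m, 0 < μ η := fun η _ => by
    rw [hμ η]; exact div_pos (hwpos η) hZ0
  -- single-site facts for the optimal φ
  set ψ : Fin n → ℝ := fun x => φ x - ∑ y, P x y * φ y with hψdef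
  have hψsum : ∑ x, ψ x = 0 := by
    simp only [hψdef]
    rw [Finset.sum_sub_distrib, Finset.sum_comm]
    have h : ∀ y : Fin n, ∑ x, P x y * φ y = φ y := fun y => by
      rw [← Finset.sum_mul, hPcol, one_mul]
    rw [Finset.sum_congr rfl fun y _ => h y]
    ring
  have hEPφ : EP (Fin n) (fun _ => c) P φ φ = c * ∑ x, φ x * ψ x := by
    simp only [EP]
    rw [Finset.mul_sum]
    refine Finset.sum_congr rfl fun x _ => ?_
    have h : ∀ y : Fin n, c * P x y * (φ x * (φ x - φ y))
        = c * φ x * φ x * P x y - c * φ x * (P x y * φ y) := fun y => by ring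
    rw [Finset.sum_congr rfl fun y _ => h y, Finset.sum_sub_distrib, ← Finset.mul_sum,
      ← Finset.mul_sum, hProw]
    simp only [hψdef]
    ring
  have hkey : c * ∑ x, φ x * ψ x = lamP * varPi (Fin n) (fun _ => c) φ := by
    rw [← hEPφ]; exact hφopt
  have hkey2 : ∑ x, φ x * ψ x = lamP * varPi (Fin n) (fun _ => c) φ / c := by
    rw [← hkey]
    field_simp
  -- the linear lift of φ
  set f : (Fin n → ℕ) → ℝ := fun η => ∑ z, φ z * (η z : ℝ) with hfdef
  have hstep1a : ∀ η ∈ configs (Fin n) m, ∀ x : Fin n,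
      ∑ y, μ η * r (η x) * P x y * (f η * (f η - f (move (Fin n) η x y)))
        = μ η * (r (η x) * f η) * ψ x := by
    intro η _ x
    by_cases hx : 1 ≤ η x
    · have hmv : ∀ y : Fin n, f (move (Fin n) η x y) = f η - φ x + φ y := fun y => by
        simp only [hfdef]
        exact f_move φ η x y hx
      have h4 : ∀ y : Fin n, μ η * r (η x) * P x y * (f η * (f η - f (move (Fin n) η x y)))
          = μ η * (r (η x) * f η) * φ x * P x y
            - μ η * (r (η x) * f η) * (P x y * φ y) := by
        intro y; rw [hmv y]; ring
      rw [Finset.sum_congr rfl fun y _ => h4 y, Finset.sum_sub_distrib, ← Finset.mul_sum,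
        ← Finset.mul_sum, hProw]
      simp only [hψdef]
      ring
    · have hx0 : η x = 0 := by omega
      simp [hx0, hr0]
  have hstep1 : EZRP (Fin n) P (fun _ k => r k) μ m f f
      = ∑ x, ψ x * ∑ η ∈ configs (Fin n) m, μ η * (r (η x) * f η) := by
    simp only [EZRP]
    rw [Finset.sum_congr rfl fun η hη =>
      Finset.sum_congr rfl fun x _ => hstep1a η hη x, Finset.sum_comm]
    exact Finset.sum_congr rfl fun x _ => by
      rw [Finset.mul_sum]
      exact Finset.sum_congr rfl fun η _ => by ring
  -- the one-site reduction identity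
  have hsite : ∀ (x : Fin n) (g : (Fin n → ℕ) → ℝ),
      ∑ η ∈ configs (Fin n) m, μ η * (r (η x) * g η)
        = c * (∑ ξ ∈ configs (Fin n) (m - 1), w ξ * g (addOne (Fin n) ξ x)) / Z := by
    intro x g
    rw [hμw (fun η => r (η x) * g η)]
    simp only [hwdef]
    rw [site_identity hm c hr0 (fun k hk => (hr k hk).ne') x g]
  set W := ∑ ξ ∈ configs (Fin n) (m - 1), w ξ with hWdef
  set F := ∑ ξ ∈ configs (Fin n) (m - 1), w ξ * f ξ with hFdef
  have hmean : meanOn (Fin n) m μ (fun η => r (η x₀)) = c * W / Z := by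
    have h := hsite x₀ (fun _ => 1)
    simp only [mul_one] at h
    simp only [meanOn]
    rw [h, ← hWdef]
  have hEZ : EZRP (Fin n) P (fun _ k => r k) μ m f f
      = W / Z * (lamP * varPi (Fin n) (fun _ => c) φ) := by
    rw [hstep1]
    have h5 : ∀ x : Fin n, ∑ η ∈ configs (Fin n) m, μ η * (r (η x) * f η)
        = c * (F + φ x * W) / Z := by
      intro x
      rw [hsite x f]
      have h6 : ∀ ξ ∈ configs (Fin n) (m - 1),
          w ξ * f (addOne (Fin n) ξ x) = w ξ * f ξ + φ x * w ξ := by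
        intro ξ _
        have hfa : f (addOne (Fin n) ξ x) = f ξ + φ x := by
          simp only [hfdef]
          exact f_addOne φ ξ x
        rw [hfa]; ring
      rw [Finset.sum_congr rfl h6, Finset.sum_add_distrib, ← Finset.mul_sum, ← hFdef, ← hWdef]
    have h5' : ∑ x : Fin n, ψ x * ∑ η ∈ configs (Fin n) m, μ η * (r (η x) * f η)
        = ∑ x : Fin n, ψ x * (c * (F + φ x * W) / Z) :=
      Finset.sum_congr rfl fun x _ => by rw [h5 x]
    rw [h5']
    have h7 : ∑ x : Fin n, ψ x * (c * (F + φ x * W) / Z)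
        = ∑ x : Fin n, (c / Z * F * ψ x + c / Z * W * (φ x * ψ x)) :=
      Finset.sum_congr rfl fun x _ => by ring
    rw [h7, Finset.sum_add_distrib, ← Finset.mul_sum, ← Finset.mul_sum, hψsum, hkey2]
    field_simp
    ring
  -- exchangeability
  have hexμ : ∀ (σ : Equiv.Perm (Fin n)) (g : (Fin n → ℕ) → ℝ),
      ∑ η ∈ configs (Fin n) m, μ η * g (fun z => η (σ z))
        = ∑ η ∈ configs (Fin n) m, μ η * g η := by
    intro σ g
    rw [hμw (fun η => g (fun z => η (σ z))), hμw g]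
    congr 1
    simp only [hwdef]
    exact exchange c r σ g
  obtain ⟨y₀, hy₀⟩ : ∃ y₀ : Fin n, y₀ ≠ x₀ := by
    refine Fintype.exists_ne_of_one_lt_card ?_ x₀
    rw [Fintype.card_fin]
    omega
  set M1 := ∑ η ∈ configs (Fin n) m, μ η * (η x₀ : ℝ) with hM1def
  set Q := ∑ η ∈ configs (Fin n) m, μ η * (η x₀ : ℝ) ^ 2 with hQdef
  set pp := ∑ η ∈ configs (Fin n) m, μ η * ((η x₀ : ℝ) * (η y₀ : ℝ)) with hppdef
  have hM1 : ∀ z : Fin n, ∑ η ∈ configs (Fin n) m, μ η * (η z : ℝ) = M1 := by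
    intro z
    rw [hM1def]
    have h := hexμ (Equiv.swap x₀ z) (fun η => (η x₀ : ℝ))
    simpa [Equiv.swap_apply_left] using h
  have hpair : ∀ z z' : Fin n, z ≠ z' →
      ∑ η ∈ configs (Fin n) m, μ η * ((η z : ℝ) * (η z' : ℝ)) = pp := by
    intro z z' hzz
    rw [hppdef]
    have hτy : Equiv.swap x₀ z y₀ ≠ z := fun h =>
      hy₀ ((Equiv.swap x₀ z).injective (by rw [h, Equiv.swap_apply_left]))
    have h := hexμ ((Equiv.swap x₀ z).trans (Equiv.swap (Equiv.swap x₀ z y₀) z'))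
      (fun η => (η x₀ : ℝ) * (η y₀ : ℝ))
    simpa [Equiv.trans_apply, Equiv.swap_apply_left,
      Equiv.swap_apply_of_ne_of_ne (Ne.symm hτy) hzz] using h
  have hMat : ∀ z z' : Fin n,
      ∑ η ∈ configs (Fin n) m, μ η * ((η z : ℝ) * (η z' : ℝ)) = if z = z' then Q else pp := by
    intro z z'
    by_cases h : z = z'
    · subst h
      rw [if_pos rfl, hQdef]
      have hq := hexμ (Equiv.swap x₀ z) (fun η => (η x₀ : ℝ) ^ 2)
      simp only [Equiv.swap_apply_left] at hq
      rw [← hq]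
      exact Finset.sum_congr rfl fun η _ => by ring
    · rw [if_neg h]
      exact hpair z z' h
  have hcast : ∀ η ∈ configs (Fin n) m, ∑ z, (η z : ℝ) = (m : ℝ) := by
    intro η hη
    obtain ⟨-, hsum⟩ := mem_configs_iff.mp hη
    rw [← Nat.cast_sum, hsum]
  have hM1m : (n : ℝ) * M1 = (m : ℝ) := by
    have hLR : ∑ z : Fin n, ∑ η ∈ configs (Fin n) m, μ η * (η z : ℝ) = (n : ℝ) * M1 := by
      rw [Finset.sum_congr rfl fun z _ => hM1 z, Finset.sum_const, Finset.card_univ,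
        Fintype.card_fin, nsmul_eq_mul]
    rw [← hLR, Finset.sum_comm]
    calc ∑ η ∈ configs (Fin n) m, ∑ z : Fin n, μ η * (η z : ℝ)
        = ∑ η ∈ configs (Fin n) m, μ η * (m : ℝ) := Finset.sum_congr rfl fun η hη => by
          rw [← Finset.mul_sum, hcast η hη]
      _ = (m : ℝ) := by rw [← Finset.sum_mul, hμ1, one_mul]
  have hcon : Q + ((n : ℝ) - 1) * pp = (m : ℝ) * M1 := by
    have h1 : ∑ z' : Fin n, ∑ η ∈ configs (Fin n) m, μ η * ((η x₀ : ℝ) * (η z' : ℝ))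
        = (m : ℝ) * M1 := by
      rw [Finset.sum_comm]
      calc ∑ η ∈ configs (Fin n) m, ∑ z' : Fin n, μ η * ((η x₀ : ℝ) * (η z' : ℝ))
          = ∑ η ∈ configs (Fin n) m, μ η * (η x₀ : ℝ) * (m : ℝ) := by
            refine Finset.sum_congr rfl fun η hη => ?_
            calc ∑ z' : Fin n, μ η * ((η x₀ : ℝ) * (η z' : ℝ))
                = μ η * (η x₀ : ℝ) * ∑ z' : Fin n, (η z' : ℝ) := by
                  rw [Finset.mul_sum]
                  exact Finset.sum_congr rfl fun z' _ => by ring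
              _ = μ η * (η x₀ : ℝ) * (m : ℝ) := by rw [hcast η hη]
        _ = (m : ℝ) * M1 := by
            rw [← Finset.sum_mul, hM1def, mul_comm]
    have h2 : ∑ z' : Fin n, ∑ η ∈ configs (Fin n) m, μ η * ((η x₀ : ℝ) * (η z' : ℝ))
        = Q + ((n : ℝ) - 1) * pp := by
      rw [Finset.sum_congr rfl fun z' _ => hMat x₀ z',
        ← Finset.add_sum_erase _ _ (Finset.mem_univ x₀), if_pos rfl]
      have h3 : ∀ z' ∈ Finset.univ.erase x₀, (if x₀ = z' then Q else pp) = pp :=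
        fun z' hz' => if_neg (Ne.symm (Finset.mem_erase.mp hz').1)
      rw [Finset.sum_congr rfl h3, Finset.sum_const,
        Finset.card_erase_of_mem (Finset.mem_univ x₀), Finset.card_univ, Fintype.card_fin,
        nsmul_eq_mul, Nat.cast_sub (by omega : 1 ≤ n)]
      norm_num
    rw [← h2, h1]
  have hEf : ∑ η ∈ configs (Fin n) m, μ η * f η = M1 * ∑ z, φ z := by
    calc ∑ η ∈ configs (Fin n) m, μ η * f η
        = ∑ η ∈ configs (Fin n) m, ∑ z, φ z * (μ η * (η z : ℝ)) := by
          refine Finset.sum_congr rfl fun η _ => ?_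
          simp only [hfdef]
          rw [Finset.mul_sum]
          exact Finset.sum_congr rfl fun z _ => by ring
      _ = ∑ z, φ z * ∑ η ∈ configs (Fin n) m, μ η * (η z : ℝ) := by
          rw [Finset.sum_comm]
          exact Finset.sum_congr rfl fun z _ => (Finset.mul_sum _ _ _).symm
      _ = ∑ z, φ z * M1 := Finset.sum_congr rfl fun z _ => by rw [hM1 z]
      _ = M1 * ∑ z, φ z := by rw [← Finset.sum_mul, mul_comm]
  have hEf2 : ∑ η ∈ configs (Fin n) m, μ η * f η ^ 2
      = (Q - pp) * (∑ z, φ z ^ 2) + pp * (∑ z, φ z) ^ 2 := by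
    calc ∑ η ∈ configs (Fin n) m, μ η * f η ^ 2
        = ∑ η ∈ configs (Fin n) m, ∑ z, ∑ z',
            φ z * φ z' * (μ η * ((η z : ℝ) * (η z' : ℝ))) := by
          refine Finset.sum_congr rfl fun η _ => ?_
          simp only [hfdef]
          rw [sq, Finset.sum_mul_sum, Finset.mul_sum]
          refine Finset.sum_congr rfl fun z _ => ?_
          rw [Finset.mul_sum]
          exact Finset.sum_congr rfl fun z' _ => by ring
      _ = ∑ z, ∑ z', φ z * φ z'
            * ∑ η ∈ configs (Fin n) m, μ η * ((η z : ℝ) * (η z' : ℝ)) := by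
          rw [Finset.sum_comm]
          refine Finset.sum_congr rfl fun z _ => ?_
          rw [Finset.sum_comm]
          exact Finset.sum_congr rfl fun z' _ => (Finset.mul_sum _ _ _).symm
      _ = ∑ z, ∑ z', φ z * φ z' * (if z = z' then Q else pp) :=
          Finset.sum_congr rfl fun z _ => Finset.sum_congr rfl fun z' _ => by rw [hMat z z']
      _ = (Q - pp) * (∑ z, φ z ^ 2) + pp * (∑ z, φ z) ^ 2 := by
          have h8 : ∀ z : Fin n, ∑ z', φ z * φ z' * (if z = z' then Q else pp)
              = (Q - pp) * φ z ^ 2 + pp * (φ z * ∑ z', φ z') := by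
            intro z
            calc ∑ z', φ z * φ z' * (if z = z' then Q else pp)
                = ∑ z', (pp * (φ z * φ z')
                    + (if z' = z then (Q - pp) * (φ z * φ z') else 0)) := by
                  refine Finset.sum_congr rfl fun z' _ => ?_
                  by_cases h : z = z'
                  · subst h
                    rw [if_pos rfl, if_pos rfl]
                    ring
                  · rw [if_neg h, if_neg (Ne.symm h)]
                    ring
              _ = pp * (φ z * ∑ z', φ z') + (Q - pp) * φ z ^ 2 := by
                  rw [Finset.sum_add_distrib, Finset.sum_ite_eq' Finset.univ z
                    (fun z' => (Q - pp) * (φ z * φ z'))]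
                  simp only [Finset.mem_univ, if_pos]
                  rw [← Finset.mul_sum, ← Finset.mul_sum]
                  ring
              _ = (Q - pp) * φ z ^ 2 + pp * (φ z * ∑ z', φ z') := by ring
          rw [Finset.sum_congr rfl fun z _ => h8 z, Finset.sum_add_distrib,
            ← Finset.mul_sum, ← Finset.mul_sum, ← Finset.sum_mul]
          ring
  have hVf : varOn (Fin n) m μ f
      = (Q - pp) * (∑ z, φ z ^ 2) + (pp - M1 ^ 2) * (∑ z, φ z) ^ 2 := by
    simp only [varOn, meanOn]
    rw [hEf2, hEf]
    ring
  have hv : varOn (Fin n) m μ (fun η => (η x₀ : ℝ)) = Q - M1 ^ 2 := by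
    simp only [varOn, meanOn]
    rw [hQdef, hM1def]
  -- positivity of varPi
  have hsumc : ∑ _x : Fin n, c = 1 := by
    rw [Finset.sum_const, Finset.card_univ, Fintype.card_fin, nsmul_eq_mul, hcdef]
    exact mul_inv_cancel₀ hn0.ne'
  have hvarPi_pos : 0 < varPi (Fin n) (fun _ => c) φ := by
    refine lt_of_le_of_ne ?_ (Ne.symm hφvar)
    have heq : varPi (Fin n) (fun _ => c) φ
        = ∑ x, c * (φ x - ∑ y, c * φ y) ^ 2 := by
      simp only [varPi]
      exact var_sq Finset.univ (fun _ => c) φ hsumc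
    rw [heq]
    exact Finset.sum_nonneg fun x _ => mul_nonneg hc0.le (sq_nonneg _)
  -- positivity of the occupation variance
  have hvpos : 0 < Q - M1 ^ 2 := by
    have heq : Q - M1 ^ 2 = ∑ η ∈ configs (Fin n) m, μ η * ((η x₀ : ℝ) - M1) ^ 2 := by
      rw [hQdef, hM1def]
      exact var_sq (configs (Fin n) m) μ (fun η => (η x₀ : ℝ)) hμ1
    have hnonneg : 0 ≤ Q - M1 ^ 2 := by
      rw [heq]
      exact Finset.sum_nonneg fun η hη => mul_nonneg (hμpos η hη).le (sq_nonneg _)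
    refine lt_of_le_of_ne hnonneg fun h0 => ?_
    have hzero : ∀ η ∈ configs (Fin n) m, μ η * ((η x₀ : ℝ) - M1) ^ 2 = 0 := by
      have hs0 : ∑ η ∈ configs (Fin n) m, μ η * ((η x₀ : ℝ) - M1) ^ 2 = 0 := by
        rw [← heq, ← h0]
      exact (Finset.sum_eq_zero_iff_of_nonneg
        (fun η hη => mul_nonneg (hμpos η hη).le (sq_nonneg _))).mp hs0
    set η₁ : Fin n → ℕ := fun z => if z = x₀ then m else 0 with hη₁
    set η₂ : Fin n → ℕ := fun z => if z = y₀ then m else 0 with hη₂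
    have hη₁m : η₁ ∈ configs (Fin n) m := by
      refine mem_configs_iff.mpr ⟨fun z => ?_, ?_⟩
      · simp only [hη₁]
        split <;> omega
      · simp [hη₁]
    have hη₂m : η₂ ∈ configs (Fin n) m := by
      refine mem_configs_iff.mpr ⟨fun z => ?_, ?_⟩
      · simp only [hη₂]
        split <;> omega
      · simp [hη₂]
    have e1 : ((m : ℝ) - M1) ^ 2 = 0 := by
      have h := hzero η₁ hη₁m
      rw [show η₁ x₀ = m from by simp [hη₁]] at h
      rcases mul_eq_zero.mp h with h' | h'
      · exact absurd h' (hμpos η₁ hη₁m).ne'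
      · exact h'
    have e2 : ((0 : ℝ) - M1) ^ 2 = 0 := by
      have h := hzero η₂ hη₂m
      rw [show η₂ x₀ = 0 from by simp [hη₂, Ne.symm hy₀]] at h
      push_cast at h
      rcases mul_eq_zero.mp h with h' | h'
      · exact absurd h' (hμpos η₂ hη₂m).ne'
      · exact h'
    have f1 : (m : ℝ) - M1 = 0 := by
      exact pow_eq_zero_iff two_ne_zero |>.mp e1
    have f2 : (0 : ℝ) - M1 = 0 := by
      exact pow_eq_zero_iff two_ne_zero |>.mp e2
    have hm0 : (m : ℝ) = 0 := by linarith
    have : m = 0 := by exact_mod_cast hm0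
    omega
  -- algebra on the covariance structure
  have hmM1 : (m : ℝ) * M1 = (n : ℝ) * M1 ^ 2 := by linear_combination (-M1) * hM1m
  have e1 : ((n : ℝ) - 1) * (pp - M1 ^ 2) = -(Q - M1 ^ 2) := by
    linear_combination hcon + hmM1
  have e2 : ((n : ℝ) - 1) * (Q - pp) = (n : ℝ) * (Q - M1 ^ 2) := by
    linear_combination -e1
  have hvfeq : ((n : ℝ) - 1) * varOn (Fin n) m μ f
      = (Q - M1 ^ 2) * ((n : ℝ) * (∑ z, φ z ^ 2) - (∑ z, φ z) ^ 2) := by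
    rw [hVf]
    linear_combination (∑ z, φ z ^ 2) * e2 + ((∑ z, φ z) ^ 2) * e1
  have hnvarPi : (n : ℝ) * (∑ z, φ z ^ 2) - (∑ z, φ z) ^ 2
      = (n : ℝ) ^ 2 * varPi (Fin n) (fun _ => c) φ := by
    have hvarPi : varPi (Fin n) (fun _ => c) φ
        = c * (∑ z, φ z ^ 2) - (c * ∑ z, φ z) ^ 2 := by
      simp only [varPi]
      rw [← Finset.mul_sum, ← Finset.mul_sum]
    rw [hvarPi, hcdef]
    field_simp
  have hvfeq2 : ((n : ℝ) - 1) * varOn (Fin n) m μ f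
      = (Q - M1 ^ 2) * ((n : ℝ) ^ 2 * varPi (Fin n) (fun _ => c) φ) := by
    rw [hvfeq, hnvarPi]
  have hrpos : 0 < (Q - M1 ^ 2) * ((n : ℝ) ^ 2 * varPi (Fin n) (fun _ => c) φ) :=
    mul_pos hvpos (mul_pos (pow_pos hn0 2) hvarPi_pos)
  have hVof : varOn (Fin n) m μ f
      = (Q - M1 ^ 2) * ((n : ℝ) ^ 2 * varPi (Fin n) (fun _ => c) φ) / ((n : ℝ) - 1) := by
    rw [eq_div_iff hn1.ne', mul_comm]
    exact hvfeq2
  have hVfpos : 0 < varOn (Fin n) m μ f := by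
    rw [hVof]
    exact div_pos hrpos hn1
  -- final assembly
  have hmain := hZ1 f
  rw [hEZ] at hmain
  rw [hmean, hv]
  have hgoal : (1 - c) * lamP * (c * W / Z / (Q - M1 ^ 2)) * varOn (Fin n) m μ f
      = W / Z * (lamP * varPi (Fin n) (fun _ => c) φ) := by
    rw [hVof, hcdef]
    field_simp [hZ0.ne', hvpos.ne', hn1.ne']
  calc lamZ = lamZ * varOn (Fin n) m μ f / varOn (Fin n) m μ f := by
        rw [mul_div_assoc, div_self hVfpos.ne', mul_one]
    _ ≤ W / Z * (lamP * varPi (Fin n) (fun _ => c) φ) / varOn (Fin n) m μ f :=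
        (div_le_div_iff_of_pos_right hVfpos).mpr hmain
    _ = (1 - c) * lamP * (c * W / Z / (Q - M1 ^ 2)) := by
        rw [← hgoal, mul_div_assoc, div_self hVfpos.ne', mul_one]
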